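/- Let (X,d) be a finite metric space and h a chaining functional of log-concave type. For every probability measure ν on X, Σ_{x∈X} ν(x)·∫₀^∞ h(ν(B(x,r))) dr ≤ 2·inf_μ Σ_{x∈X} ν(x)·∫₀^∞ h(μ(B(x,r))) dr + diam(X)/e, where the infimum is taken over all probability measures μ on X (with the conventions 0·∞ = 0 and h(0) := lim_{p→0⁺} h(p) ∈ (0,∞]). -/

import Mathlib

open MeasureTheory

noncomputable section

/-- `f` is log-concave on `[0,∞)`. -/
def IsLogConcaveOn (f : ℝ → ℝ) : Prop :=
  ∀ x ∈ Set.Ici (0:ℝ), ∀ y ∈ Set.Ici (0:ℝ), ∀ t ∈ Set.Icc (0:ℝ) 1,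
    f x ^ t * f y ^ (1 - t) ≤ f (t * x + (1 - t) * y)

/-- `f` is a continuous, non-increasing, log-concave probability density on `[0,∞)`
normalized so that `f 0 = 1`. -/
structure IsChainingDensity (f : ℝ → ℝ) : Prop where
  nonneg : ∀ t : ℝ, 0 ≤ t → 0 ≤ f t
  continuousOn : ContinuousOn f (Set.Ici 0)
  antitoneOn : AntitoneOn f (Set.Ici 0)
  logConcave : IsLogConcaveOn f
  total : (∫ t in Set.Ioi (0:ℝ), f t) = 1
  normalized : f 0 = 1

/-- The complementary cumulative distribution function `F(s) = ∫_s^∞ f(t) dt`. -/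
def ccdf (f : ℝ → ℝ) (s : ℝ) : ℝ := ∫ t in Set.Ioi s, f t

/-- The chaining functional `h(p) = F⁻¹(p)`, defined on `(0,1]` as the least
`s ≥ 0` with `F(s) ≤ p`. -/
def chainFn (f : ℝ → ℝ) (p : ℝ) : ℝ := sInf {s : ℝ | 0 ≤ s ∧ ccdf f s ≤ p}

open scoped ENNReal

/-- The extended (`[0,∞]`-valued) chaining functional: `h(p)` is the least `s ≥ 0`
with `F(s) ≤ p`, and `+∞` when no such `s` exists (in particular
`h(0) = lim_{p→0⁺} h(p) ∈ (0,∞]`). -/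
def chainFnE (f : ℝ → ℝ) (p : ℝ) : ℝ≥0∞ :=
  sInf {t : ℝ≥0∞ | ∃ s : ℝ, 0 ≤ s ∧ ccdf f s ≤ p ∧ t = ENNReal.ofReal s}

/-- A probability measure on a finite set, given by its point masses. -/
def IsProbOn {X : Type*} [Fintype X] (μ : X → ℝ) : Prop :=
  (∀ x, 0 ≤ μ x) ∧ (∑ x, μ x) = 1

/-- The mass `μ(B(x,r))` of the closed ball of radius `r` around `x`. -/
def ballMass {X : Type*} [MetricSpace X] [Fintype X] (μ : X → ℝ) (x : X) (r : ℝ) : ℝ :=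
  ∑ y ∈ Finset.univ.filter (fun y => dist x y ≤ r), μ y

/-- `∫₀^∞ h(μ(B(x,r))) dr`, valued in `[0,∞]`. -/
def Hint {X : Type*} [MetricSpace X] [Fintype X] (f : ℝ → ℝ) (μ : X → ℝ) (x : X) : ℝ≥0∞ :=
  ∫⁻ r in Set.Ioi (0:ℝ), chainFnE f (ballMass μ x r)

/-- The diameter of the finite metric space `X`. -/
def fdiam (X : Type*) [MetricSpace X] : ℝ := Metric.diam (Set.univ : Set X)

/-! ### auxiliary lemmas -/

section Density

variable {f : ℝ → ℝ} (hf : IsChainingDensity f)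

lemma integrableOn_Ioi (hf : IsChainingDensity f) : IntegrableOn f (Set.Ioi (0:ℝ)) := by
  by_contra h
  have := hf.total
  rw [integral_undef h] at this
  norm_num at this

lemma submult (hf : IsChainingDensity f) {x y : ℝ} (hx : 0 ≤ x) (hy : 0 ≤ y) :
    f (x + y) ≤ f x * f y := by
  rcases eq_or_lt_of_le (by linarith : (0:ℝ) ≤ x + y) with hxy | hxy
  · have hx0 : x = 0 := by linarith
    have hy0 : y = 0 := by linarith
    simp [hx0, hy0, hf.normalized]
  rcases le_or_gt (f (x+y)) 0 with hf0 | hf0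
  · exact le_trans hf0 (mul_nonneg (hf.nonneg x hx) (hf.nonneg y hy))
  set t := x / (x + y) with ht
  have ht0 : 0 ≤ t := div_nonneg hx (by linarith)
  have ht1 : t ≤ 1 := by
    rw [div_le_one hxy]; linarith
  have hne : x + y ≠ 0 := ne_of_gt hxy
  have h1t : 1 - t = y / (x + y) := by
    rw [ht]; field_simp; ring
  have e1 : t * (x + y) + (1 - t) * 0 = x := by
    rw [ht]; field_simp; ring
  have e2 : (1 - t) * (x + y) + (1 - (1-t)) * 0 = y := by
    rw [h1t]; field_simp; ring
  have k1 := hf.logConcave (x+y) (by simp; linarith) 0 (by simp) t ⟨ht0, ht1⟩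
  have k2 := hf.logConcave (x+y) (by simp; linarith) 0 (by simp) (1-t) ⟨by linarith, by linarith⟩
  rw [e1, hf.normalized, Real.one_rpow, mul_one] at k1
  rw [e2, hf.normalized, Real.one_rpow, mul_one] at k2
  have := mul_le_mul k1 k2 (Real.rpow_nonneg hf0.le _) (hf.nonneg x hx)
  calc f (x+y) = f (x+y) ^ (t + (1-t)) := by norm_num
    _ = f (x+y) ^ t * f (x+y) ^ (1-t) := Real.rpow_add hf0 _ _
    _ ≤ f x * f y := this

/-- truncated version of `f`, continuous on all of `ℝ`. -/
def ftil (f : ℝ → ℝ) : ℝ → ℝ := fun t => f (max t 0)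

lemma ftil_cont (hf : IsChainingDensity f) : Continuous (ftil f) :=
  hf.continuousOn.comp_continuous (continuous_id.max continuous_const)
    (fun t => le_max_right t 0)

lemma ccdf_repr (hf : IsChainingDensity f) {s : ℝ} (hs : 0 ≤ s) :
    ccdf f s = 1 - ∫ t in (0:ℝ)..s, ftil f t := by
  have hint := integrableOn_Ioi hf
  have h1 : IntegrableOn f (Set.Ioc 0 s) := hint.mono_set Set.Ioc_subset_Ioi_self
  have h2 : IntegrableOn f (Set.Ioi s) := hint.mono_set (Set.Ioi_subset_Ioi hs)
  have hu : ∫ t in Set.Ioc 0 s ∪ Set.Ioi s, f t =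
      (∫ t in Set.Ioc 0 s, f t) + ∫ t in Set.Ioi s, f t :=
    setIntegral_union (Set.Ioc_disjoint_Ioi le_rfl) measurableSet_Ioi h1 h2
  rw [Set.Ioc_union_Ioi_eq_Ioi hs, hf.total] at hu
  have hiv : ∫ t in (0:ℝ)..s, ftil f t = ∫ t in Set.Ioc 0 s, f t := by
    rw [intervalIntegral.integral_of_le hs]
    refine setIntegral_congr_fun measurableSet_Ioc (fun t ht => ?_)
    show f (max t 0) = f t
    rw [max_eq_left ht.1.le]
  rw [hiv]
  show (∫ t in Set.Ioi s, f t) = _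
  linarith

lemma ccdf_le_f (hf : IsChainingDensity f) {s : ℝ} (hs : 0 ≤ s) : ccdf f s ≤ f s := by
  have hint := integrableOn_Ioi hf
  set u := (Set.Ioi (0:ℝ)).indicator (ftil f) with hu
  have huint : Integrable u := by
    refine (IntegrableOn.integrable_indicator ?_ measurableSet_Ioi)
    exact hint.congr_fun (fun t ht => by
      show f t = f (max t 0); rw [max_eq_left (le_of_lt ht)]) measurableSet_Ioi
  have hucomp : Integrable (fun t => u (t - s)) := huint.comp_sub_right s
  have hueq : ∀ t ∈ Set.Ioi s, u (t - s) = ftil f (t - s) := by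
    intro t ht
    rw [hu, Set.indicator_of_mem (by simp at ht ⊢; linarith)]
  have hrint : IntegrableOn (fun t => ftil f (t - s)) (Set.Ioi s) :=
    (hucomp.integrableOn).congr_fun hueq measurableSet_Ioi
  have hpt : ∀ t ∈ Set.Ioi s, f t ≤ f s * ftil f (t - s) := by
    intro t ht
    simp only [Set.mem_Ioi] at ht
    have h1 : (0:ℝ) ≤ t - s := by linarith
    have := submult hf hs h1
    rw [show s + (t - s) = t by ring] at this
    refine this.trans (le_of_eq ?_)
    show f s * f (t-s) = f s * f (max (t-s) 0)
    rw [max_eq_left h1]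
  have hmono : ccdf f s ≤ ∫ t in Set.Ioi s, f s * ftil f (t - s) := by
    refine setIntegral_mono_on (hint.mono_set (Set.Ioi_subset_Ioi hs))
      (hrint.const_mul _) measurableSet_Ioi hpt
  refine hmono.trans (le_of_eq ?_)
  rw [integral_const_mul]
  have : ∫ t in Set.Ioi s, ftil f (t - s) = 1 := by
    rw [← setIntegral_congr_fun measurableSet_Ioi hueq]
    have : ∫ t in Set.Ioi s, u (t - s) = ∫ t, u (t - s) := by
      rw [← integral_indicator measurableSet_Ioi]
      congr 1
      funext t
      by_cases ht : t ∈ Set.Ioi s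
      · rw [Set.indicator_of_mem ht]
      · rw [Set.indicator_of_notMem ht, hu, Set.indicator_of_notMem
          (by simp at ht ⊢; linarith)]
    rw [this, integral_sub_right_eq_self u s, hu, integral_indicator measurableSet_Ioi]
    show (∫ t in Set.Ioi (0:ℝ), f (max t 0)) = 1
    rw [setIntegral_congr_fun measurableSet_Ioi (fun t (ht : t ∈ Set.Ioi (0:ℝ)) => by
      show f (max t 0) = f t
      rw [max_eq_left (le_of_lt ht)]), hf.total]
  rw [this, mul_one]

lemma ccdf_shift (hf : IsChainingDensity f) {a c : ℝ} (ha : 0 ≤ a) (hc : 0 ≤ c) :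
    ccdf f (a + c) ≤ Real.exp (-c) * ccdf f a := by
  set Φ : ℝ → ℝ := fun s => ∫ t in (0:ℝ)..s, ftil f t with hΦdef
  have hΦ : ∀ s : ℝ, HasDerivAt Φ (ftil f s) s := fun s =>
    ((ftil_cont hf).integral_hasStrictDerivAt 0 s).hasDerivAt
  set gg : ℝ → ℝ := fun s => Real.exp s * (1 - Φ s) with hggdef
  have hgg : ∀ s : ℝ, HasDerivAt gg (Real.exp s * (1 - Φ s) + Real.exp s * (-(ftil f s))) s := by
    intro s
    have := (Real.hasDerivAt_exp s).mul ((hasDerivAt_const s (1:ℝ)).sub (hΦ s))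
    refine this.congr_deriv ?_
    simp only [Pi.sub_apply]
    ring
  have hanti : AntitoneOn gg (Set.Ici 0) := by
    refine antitoneOn_of_deriv_nonpos (convex_Ici 0) ?_ ?_ ?_
    · exact fun s _ => ((hgg s).continuousAt).continuousWithinAt
    · intro s hs
      exact ((hgg s).differentiableAt).differentiableWithinAt
    · intro s hs
      rw [interior_Ici] at hs
      rw [(hgg s).deriv]
      have hs0 : (0:ℝ) ≤ s := le_of_lt hs
      have h1 : 1 - Φ s = ccdf f s := (ccdf_repr hf hs0).symm
      have h2 : ftil f s = f s := by show f (max s 0) = f s; rw [max_eq_left hs0]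
      rw [h1, h2]
      have h3 : ccdf f s - f s ≤ 0 := by linarith [ccdf_le_f hf hs0]
      calc Real.exp s * ccdf f s + Real.exp s * (-(f s))
          = Real.exp s * (ccdf f s - f s) := by ring
        _ ≤ 0 := mul_nonpos_of_nonneg_of_nonpos (Real.exp_nonneg s) h3
  have key : gg (a + c) ≤ gg a := hanti (Set.mem_Ici.2 ha) (by simp; linarith) (by linarith)
  have e1 : gg a = Real.exp a * ccdf f a := by
    rw [hggdef]; simp only []; rw [← ccdf_repr hf ha]
  have e2 : gg (a+c) = Real.exp (a+c) * ccdf f (a+c) := by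
    rw [hggdef]; simp only []; rw [← ccdf_repr hf (by linarith)]
  rw [e1, e2] at key
  have hexp : (0:ℝ) < Real.exp (-(a+c)) := Real.exp_pos _
  have := mul_le_mul_of_nonneg_left key hexp.le
  calc ccdf f (a+c) = Real.exp (-(a+c)) * (Real.exp (a+c) * ccdf f (a+c)) := by
        rw [← mul_assoc, ← Real.exp_add, show -(a+c) + (a+c) = 0 by ring, Real.exp_zero, one_mul]
    _ ≤ Real.exp (-(a+c)) * (Real.exp a * ccdf f a) := this
    _ = Real.exp (-c) * ccdf f a := by
        rw [← mul_assoc, ← Real.exp_add, show -(a+c) + a = -c by ring]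

lemma chainFnE_anti (f : ℝ → ℝ) {p q : ℝ} (h : p ≤ q) : chainFnE f q ≤ chainFnE f p := by
  apply sInf_le_sInf
  rintro t ⟨s, h0, hle, rfl⟩
  exact ⟨s, h0, hle.trans h, rfl⟩

lemma chainFnE_of_one_le (hf : IsChainingDensity f) {p : ℝ} (hp : 1 ≤ p) :
    chainFnE f p = 0 := by
  refine le_antisymm ?_ zero_le
  refine sInf_le ⟨0, le_refl 0, ?_, by simp⟩
  show ccdf f 0 ≤ p
  rw [ccdf]; rw [hf.total]; exact hp

lemma chainFnE_add_log (hf : IsChainingDensity f) {p' p : ℝ} (h0 : 0 < p') (h1 : p' ≤ p) :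
    chainFnE f p' ≤ chainFnE f p + ENNReal.ofReal (Real.log (p / p')) := by
  have hp : 0 < p := lt_of_lt_of_le h0 h1
  set c := Real.log (p / p') with hcdef
  have hc : 0 ≤ c := Real.log_nonneg ((one_le_div h0).2 h1)
  unfold chainFnE
  rw [ENNReal.sInf_add]
  refine le_iInf₂ (fun b hb => ?_)
  obtain ⟨s, hs0, hsle, rfl⟩ := hb
  have hmem : ccdf f (s + c) ≤ p' := by
    have h2 := ccdf_shift hf hs0 hc
    have h3 : Real.exp (-c) * ccdf f s ≤ Real.exp (-c) * p :=
      mul_le_mul_of_nonneg_left hsle (Real.exp_nonneg _)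
    have h4 : Real.exp (-c) = p' / p := by
      rw [hcdef, ← Real.log_inv, Real.exp_log (by positivity), inv_div]
    have h5 : Real.exp (-c) * p = p' := by
      rw [h4]; field_simp
    linarith
  refine le_trans (sInf_le ⟨s + c, by linarith, hmem, rfl⟩) (le_of_eq ?_)
  rw [ENNReal.ofReal_add hs0 hc]

end Density

section Balls

variable {X : Type*} [MetricSpace X] [Fintype X]

lemma ballMass_mono (μ : X → ℝ) (hμ : ∀ x, 0 ≤ μ x) (x : X) : Monotone (ballMass μ x) := by
  intro r r' h
  apply Finset.sum_le_sum_of_subset_of_nonneg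
  · intro y hy
    simp only [Finset.mem_filter, Finset.mem_univ, true_and] at hy ⊢
    linarith
  · exact fun y _ _ => hμ y

lemma ballMass_nonneg (μ : X → ℝ) (hμ : ∀ x, 0 ≤ μ x) (x : X) (r : ℝ) :
    0 ≤ ballMass μ x r := Finset.sum_nonneg fun y _ => hμ y

lemma ballMass_le_one (μ : X → ℝ) (hμ : IsProbOn μ) (x : X) (r : ℝ) :
    ballMass μ x r ≤ 1 := by
  rw [← hμ.2]
  exact Finset.sum_le_sum_of_subset_of_nonneg (Finset.filter_subset _ _) fun y _ _ => hμ.1 y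

lemma self_le_ballMass (μ : X → ℝ) (hμ : ∀ x, 0 ≤ μ x) (x : X) {r : ℝ} (hr : 0 ≤ r) :
    μ x ≤ ballMass μ x r := by
  apply Finset.single_le_sum (fun y _ => hμ y)
  simp [hr]

lemma ballMass_eq_one (μ : X → ℝ) (hμ : IsProbOn μ) (x : X) {r : ℝ} (hr : fdiam X ≤ r) :
    ballMass μ x r = 1 := by
  rw [← hμ.2, ballMass]
  congr 1
  rw [Finset.filter_true_of_mem]
  intro y _
  refine le_trans ?_ hr
  exact Metric.dist_le_diam_of_mem (Set.Finite.isBounded (Set.finite_univ)) trivial trivial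

end Balls

section Corr

variable {X : Type*} [MetricSpace X] [Fintype X]

def corr (f : ℝ → ℝ) (μ ν : X → ℝ) (x : X) (r : ℝ) : ℝ≥0∞ :=
  if ballMass ν x (2*r) < ballMass μ x r ∧ 0 < ballMass ν x (2*r) then
    ENNReal.ofReal (Real.log (ballMass μ x r / ballMass ν x (2*r)))
  else 0

lemma measurable_hint_integrand (f : ℝ → ℝ) (μ : X → ℝ) (hμ : ∀ x, 0 ≤ μ x) (x : X) (c : ℝ)
    (hc : 0 ≤ c) : Measurable (fun r : ℝ => chainFnE f (ballMass μ x (c*r))) := by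
  have : Antitone (fun r : ℝ => chainFnE f (ballMass μ x (c*r))) := by
    intro a b hab
    exact chainFnE_anti f (ballMass_mono μ hμ x (by nlinarith))
  exact this.measurable

lemma measurable_corr (f : ℝ → ℝ) (μ ν : X → ℝ) (hμ : ∀ x, 0 ≤ μ x) (hν : ∀ x, 0 ≤ ν x)
    (x : X) : Measurable (fun r : ℝ => corr f μ ν x r) := by
  have h1 : Measurable (fun r : ℝ => ballMass μ x r) := (ballMass_mono μ hμ x).measurable
  have h2 : Measurable (fun r : ℝ => ballMass ν x (2*r)) := by
    have : Monotone (fun r : ℝ => ballMass ν x (2*r)) :=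
      fun a b hab => ballMass_mono ν hν x (by linarith)
    exact this.measurable
  unfold corr
  apply Measurable.ite
  · exact MeasurableSet.inter (measurableSet_lt h2 h1) (measurableSet_lt measurable_const h2)
  · exact ENNReal.measurable_ofReal.comp <| Real.measurable_log.comp (h1.div h2)
  · exact measurable_const

lemma corr_step (f : ℝ → ℝ) (hf : IsChainingDensity f) (μ ν : X → ℝ)
    (x : X) {r : ℝ} (hx : 0 < ballMass ν x (2*r)) :
    chainFnE f (ballMass ν x (2*r)) ≤ chainFnE f (ballMass μ x r) + corr f μ ν x r := by
  by_cases h : ballMass ν x (2*r) < ballMass μ x r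
  · rw [corr, if_pos ⟨h, hx⟩]
    exact chainFnE_add_log hf hx h.le
  · rw [corr, if_neg (by tauto), add_zero]
    exact chainFnE_anti f (not_lt.1 h)

end Corr

section Vitali

variable {X : Type*} [MetricSpace X] [Fintype X]

lemma mul_neg_log_le_inv_e {q : ℝ} (hq : 0 < q) : q * (- Real.log q) ≤ (Real.exp 1)⁻¹ := by
  have he : (0:ℝ) < Real.exp 1 := Real.exp_pos 1
  have h1 : (0:ℝ) < (q * Real.exp 1)⁻¹ := by positivity
  have h2 := Real.log_le_sub_one_of_pos h1
  rw [Real.log_inv, Real.log_mul (ne_of_gt hq) (ne_of_gt he), Real.log_exp] at h2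
  have h3 : - Real.log q ≤ (q * Real.exp 1)⁻¹ := by linarith
  have h4 : q * (- Real.log q) ≤ q * (q * Real.exp 1)⁻¹ :=
    mul_le_mul_of_nonneg_left h3 hq.le
  refine h4.trans (le_of_eq ?_)
  field_simp

lemma vitali_aux (μ ν : X → ℝ) (hμ : IsProbOn μ) (hν : ∀ x, 0 ≤ ν x) {r : ℝ} (hr : 0 ≤ r) :
    ∀ (n : ℕ) (T : Finset X), T.card ≤ n →
      (∀ x ∈ T, 0 < ballMass ν x (2*r) ∧ ballMass ν x (2*r) < ballMass μ x r) →
      ∑ x ∈ T, ν x * Real.log (ballMass μ x r / ballMass ν x (2*r)) ≤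
        (Real.exp 1)⁻¹ * ∑ y ∈ Finset.univ.filter (fun y => ∃ x ∈ T, dist x y ≤ r), μ y := by
  classical
  intro n
  induction n with
  | zero =>
    intro T hcard _
    rw [Finset.card_eq_zero.1 (Nat.le_zero.1 hcard)]
    simp only [Finset.sum_empty]
    exact mul_nonneg (inv_nonneg.2 (Real.exp_nonneg 1)) (Finset.sum_nonneg fun y _ => hμ.1 y)
  | succ n ih =>
    intro T hcard hT
    rcases Finset.eq_empty_or_nonempty T with rfl | hTne
    · simp only [Finset.sum_empty]
      exact mul_nonneg (inv_nonneg.2 (Real.exp_nonneg 1)) (Finset.sum_nonneg fun y _ => hμ.1 y)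
    obtain ⟨x₀, hx₀T, hmin⟩ := Finset.exists_min_image T
      (fun x => ballMass ν x (2*r) / ballMass μ x r) hTne
    obtain ⟨hν₀pos, hνμ₀⟩ := hT x₀ hx₀T
    have hμ₀pos : 0 < ballMass μ x₀ r := lt_trans hν₀pos hνμ₀
    set q : X → ℝ := fun x => ballMass ν x (2*r) / ballMass μ x r with hq
    have hq₀pos : 0 < q x₀ := div_pos hν₀pos hμ₀pos
    have hq₀lt : q x₀ < 1 := (div_lt_one hμ₀pos).2 hνμ₀
    set C := T.filter (fun x => dist x₀ x ≤ 2*r) with hC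
    set T' := T.filter (fun x => ¬ dist x₀ x ≤ 2*r) with hT'
    have hsplit := Finset.sum_filter_add_sum_filter_not T (fun x => dist x₀ x ≤ 2*r)
      (fun x => ν x * Real.log (ballMass μ x r / ballMass ν x (2*r)))
    -- bound on C
    have hCsub : C ⊆ Finset.univ.filter (fun y => dist x₀ y ≤ 2*r) := by
      intro y hy
      exact Finset.mem_filter.2 ⟨Finset.mem_univ y, (Finset.mem_filter.1 hy).2⟩
    have hClog : ∀ x ∈ C, ν x * Real.log (ballMass μ x r / ballMass ν x (2*r)) ≤
        ν x * (- Real.log (q x₀)) := by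
      intro x hx
      have hxT : x ∈ T := (Finset.mem_filter.1 hx).1
      obtain ⟨hνx, hνμx⟩ := hT x hxT
      have hμx : 0 < ballMass μ x r := lt_trans hνx hνμx
      have hqx : 0 < q x := div_pos hνx hμx
      have e1 : Real.log (ballMass μ x r / ballMass ν x (2*r)) = - Real.log (q x) := by
        rw [hq, ← Real.log_inv, inv_div]
      rw [e1]
      refine mul_le_mul_of_nonneg_left (neg_le_neg ?_) (hν x)
      exact (Real.log_le_log_iff hq₀pos hqx).2 (hmin x hxT)
    have hClog0 : 0 ≤ - Real.log (q x₀) := by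
      rw [neg_nonneg]
      exact Real.log_nonpos hq₀pos.le hq₀lt.le
    have hCsum : ∑ x ∈ C, ν x * Real.log (ballMass μ x r / ballMass ν x (2*r)) ≤
        (Real.exp 1)⁻¹ * ballMass μ x₀ r := by
      calc ∑ x ∈ C, ν x * Real.log (ballMass μ x r / ballMass ν x (2*r))
          ≤ ∑ x ∈ C, ν x * (- Real.log (q x₀)) := Finset.sum_le_sum hClog
        _ = (- Real.log (q x₀)) * ∑ x ∈ C, ν x := by rw [← Finset.sum_mul, mul_comm]
        _ ≤ (- Real.log (q x₀)) * ballMass ν x₀ (2*r) := by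
            refine mul_le_mul_of_nonneg_left ?_ hClog0
            exact Finset.sum_le_sum_of_subset_of_nonneg hCsub (fun y _ _ => hν y)
        _ = (q x₀ * (- Real.log (q x₀))) * ballMass μ x₀ r := by
            have hb : ballMass ν x₀ (2*r) = q x₀ * ballMass μ x₀ r := by
              rw [hq]
              field_simp
            rw [hb]
            ring
        _ ≤ (Real.exp 1)⁻¹ * ballMass μ x₀ r :=
            mul_le_mul_of_nonneg_right (mul_neg_log_le_inv_e hq₀pos)
              (ballMass_nonneg μ hμ.1 x₀ r)
    -- IH on T'
    have hx₀C : x₀ ∈ C := Finset.mem_filter.2 ⟨hx₀T, by rw [dist_self]; linarith⟩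
    have hT'sub : T' ⊆ T.erase x₀ := by
      intro y hy
      obtain ⟨hyT, hyd⟩ := Finset.mem_filter.1 hy
      refine Finset.mem_erase.2 ⟨?_, hyT⟩
      rintro rfl
      exact hyd (by rw [dist_self]; linarith)
    have hT'card : T'.card ≤ n := by
      have h1 := Finset.card_le_card hT'sub
      have h2 : (T.erase x₀).card = T.card - 1 := Finset.card_erase_of_mem hx₀T
      have h3 : 1 ≤ T.card := Finset.card_pos.2 hTne
      omega
    have hIH := ih T' hT'card (fun x hx => hT x (Finset.mem_filter.1 hx).1)
    -- combine
    have hdisj : Disjoint (Finset.univ.filter (fun y => dist x₀ y ≤ r))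
        (Finset.univ.filter (fun y => ∃ x ∈ T', dist x y ≤ r)) := by
      rw [Finset.disjoint_left]
      intro y hy1 hy2
      obtain ⟨-, hd1⟩ := Finset.mem_filter.1 hy1
      obtain ⟨-, x', hx'T', hd2⟩ := Finset.mem_filter.1 hy2
      obtain ⟨hx'T, hx'far⟩ := Finset.mem_filter.1 hx'T'
      exact hx'far (le_trans (dist_triangle x₀ y x') (by rw [dist_comm y x']; linarith))
    have hsubN : (Finset.univ.filter (fun y => dist x₀ y ≤ r)) ∪
        (Finset.univ.filter (fun y => ∃ x ∈ T', dist x y ≤ r)) ⊆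
        Finset.univ.filter (fun y => ∃ x ∈ T, dist x y ≤ r) := by
      intro y hy
      rcases Finset.mem_union.1 hy with hy | hy
      · exact Finset.mem_filter.2 ⟨Finset.mem_univ y, x₀, hx₀T, (Finset.mem_filter.1 hy).2⟩
      · obtain ⟨-, x', hx'T', hd⟩ := Finset.mem_filter.1 hy
        exact Finset.mem_filter.2 ⟨Finset.mem_univ y, x', (Finset.mem_filter.1 hx'T').1, hd⟩
    have hsum2 : ballMass μ x₀ r + ∑ y ∈ Finset.univ.filter (fun y => ∃ x ∈ T', dist x y ≤ r), μ y
        ≤ ∑ y ∈ Finset.univ.filter (fun y => ∃ x ∈ T, dist x y ≤ r), μ y := by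
      rw [ballMass, ← Finset.sum_union hdisj]
      exact Finset.sum_le_sum_of_subset_of_nonneg hsubN (fun y _ _ => hμ.1 y)
    calc ∑ x ∈ T, ν x * Real.log (ballMass μ x r / ballMass ν x (2*r))
        = (∑ x ∈ C, ν x * Real.log (ballMass μ x r / ballMass ν x (2*r)))
          + ∑ x ∈ T', ν x * Real.log (ballMass μ x r / ballMass ν x (2*r)) := hsplit.symm
      _ ≤ (Real.exp 1)⁻¹ * ballMass μ x₀ r + (Real.exp 1)⁻¹ *
          ∑ y ∈ Finset.univ.filter (fun y => ∃ x ∈ T', dist x y ≤ r), μ y :=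
            add_le_add hCsum hIH
      _ = (Real.exp 1)⁻¹ * (ballMass μ x₀ r +
          ∑ y ∈ Finset.univ.filter (fun y => ∃ x ∈ T', dist x y ≤ r), μ y) := by ring
      _ ≤ _ := mul_le_mul_of_nonneg_left hsum2 (inv_nonneg.2 (Real.exp_nonneg 1))

lemma vitali (f : ℝ → ℝ) (μ ν : X → ℝ) (hμ : IsProbOn μ) (hν : IsProbOn ν) {r : ℝ} (hr : 0 ≤ r) :
    ∑ x, ENNReal.ofReal (ν x) * corr f μ ν x r ≤ ENNReal.ofReal (Real.exp 1)⁻¹ := by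
  set T := Finset.univ.filter
    (fun x : X => ballMass ν x (2*r) < ballMass μ x r ∧ 0 < ballMass ν x (2*r)) with hTdef
  have hsplit : ∑ x, ENNReal.ofReal (ν x) * corr f μ ν x r =
      ∑ x ∈ T, ENNReal.ofReal (ν x * Real.log (ballMass μ x r / ballMass ν x (2*r))) := by
    rw [← Finset.sum_filter_add_sum_filter_not Finset.univ
      (fun x : X => ballMass ν x (2*r) < ballMass μ x r ∧ 0 < ballMass ν x (2*r))]
    have hz : ∑ x ∈ Finset.univ.filter
        (fun x : X => ¬(ballMass ν x (2*r) < ballMass μ x r ∧ 0 < ballMass ν x (2*r))),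
        ENNReal.ofReal (ν x) * corr f μ ν x r = 0 := by
      refine Finset.sum_eq_zero (fun x hx => ?_)
      rw [corr, if_neg (Finset.mem_filter.1 hx).2, mul_zero]
    rw [hz, add_zero]
    refine Finset.sum_congr rfl (fun x hx => ?_)
    obtain ⟨-, hlt, hpos⟩ := Finset.mem_filter.1 hx
    rw [corr, if_pos ⟨hlt, hpos⟩, ← ENNReal.ofReal_mul (hν.1 x)]
  rw [hsplit, ← ENNReal.ofReal_sum_of_nonneg (fun x hx => ?_)]
  · refine ENNReal.ofReal_le_ofReal ?_
    have hT : ∀ x ∈ T, 0 < ballMass ν x (2*r) ∧ ballMass ν x (2*r) < ballMass μ x r :=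
      fun x hx => ⟨(Finset.mem_filter.1 hx).2.2, (Finset.mem_filter.1 hx).2.1⟩
    refine (vitali_aux μ ν hμ hν.1 hr T.card T le_rfl hT).trans ?_
    calc (Real.exp 1)⁻¹ * ∑ y ∈ Finset.univ.filter (fun y => ∃ x ∈ T, dist x y ≤ r), μ y
        ≤ (Real.exp 1)⁻¹ * ∑ y, μ y := by
          refine mul_le_mul_of_nonneg_left ?_ (inv_nonneg.2 (Real.exp_nonneg 1))
          exact Finset.sum_le_sum_of_subset_of_nonneg (Finset.filter_subset _ _)
            (fun y _ _ => hμ.1 y)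
      _ = (Real.exp 1)⁻¹ := by rw [hμ.2, mul_one]
  · obtain ⟨-, hlt, hpos⟩ := Finset.mem_filter.1 hx
    refine mul_nonneg (hν.1 x) (Real.log_nonneg ?_)
    rw [le_div_iff₀ hpos, one_mul]
    exact hlt.le

lemma corr_zero_far (f : ℝ → ℝ) (μ ν : X → ℝ) (hμ : IsProbOn μ) (hν : IsProbOn ν)
    {r : ℝ} (hr : fdiam X / 2 ≤ r) (x : X) : corr f μ ν x r = 0 := by
  rw [corr, if_neg]
  rintro ⟨h1, -⟩
  have : ballMass ν x (2*r) = 1 := ballMass_eq_one ν hν x (by linarith)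
  have := ballMass_le_one μ hμ x r
  linarith

end Vitali

section Scaling

lemma lintegral_Ioi_two_smul (φ : ℝ → ℝ≥0∞) (hφ : Measurable φ) :
    ∫⁻ r in Set.Ioi (0:ℝ), φ r = 2 * ∫⁻ r in Set.Ioi (0:ℝ), φ (2*r) := by
  set ψ := (Set.Ioi (0:ℝ)).indicator φ with hψ
  have mψ : Measurable ψ := hφ.indicator measurableSet_Ioi
  have e1 : ∫⁻ r in Set.Ioi (0:ℝ), φ r = ∫⁻ r, ψ r := by
    rw [hψ, lintegral_indicator measurableSet_Ioi]
  have e2 : ∫⁻ r in Set.Ioi (0:ℝ), φ (2*r) = ∫⁻ r, ψ (2*r) := by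
    rw [← lintegral_indicator (f := fun r => φ (2*r)) measurableSet_Ioi]
    congr 1
    funext r
    by_cases h : r ∈ Set.Ioi (0:ℝ)
    · rw [Set.indicator_of_mem h, hψ, Set.indicator_of_mem (by simp at h ⊢; linarith)]
    · rw [Set.indicator_of_notMem h, hψ, Set.indicator_of_notMem (by simp at h ⊢; linarith)]
  have e3 : ∫⁻ r, ψ (2*r) = ENNReal.ofReal |(2:ℝ)⁻¹| * ∫⁻ r, ψ r := by
    rw [← lintegral_map mψ (measurable_const_mul 2),
      Real.map_volume_mul_left (two_ne_zero), lintegral_smul_measure, smul_eq_mul]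
  have h2 : (2:ℝ≥0∞) * ENNReal.ofReal |(2:ℝ)⁻¹| = 1 := by
    rw [show |(2:ℝ)⁻¹| = (2:ℝ)⁻¹ from abs_of_pos (by norm_num),
      ENNReal.ofReal_inv_of_pos (by norm_num), show ENNReal.ofReal (2:ℝ) = 2 by norm_num]
    exact ENNReal.mul_inv_cancel (by norm_num) (by norm_num)
  rw [e1, e2, e3, ← mul_assoc, h2, one_mul]

end Scaling

/-- for every probability measure `ν` on a finite metric space `X`,
`Σ_x ν(x)·∫₀^∞ h(ν(B(x,r))) dr ≤ 2·inf_μ Σ_x ν(x)·∫₀^∞ h(μ(B(x,r))) dr + diam(X)/e`,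
the infimum being over all probability measures `μ` on `X`. -/
theorem stmt3 {X : Type*} [MetricSpace X] [Fintype X]
    (f : ℝ → ℝ) (hf : IsChainingDensity f) (ν : X → ℝ) (hν : IsProbOn ν) :
    (∑ x, ENNReal.ofReal (ν x) * Hint f ν x) ≤
      2 * (⨅ μ : {m : X → ℝ // IsProbOn m}, ∑ x, ENNReal.ofReal (ν x) * Hint f μ.1 x)
        + ENNReal.ofReal (fdiam X / Real.exp 1) := by
  classical
  have hν0 := hν.1
  have hDnn : (0:ℝ) ≤ fdiam X := Metric.diam_nonneg
  have key : ∀ (μ : X → ℝ), IsProbOn μ →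
      (∑ x, ENNReal.ofReal (ν x) * Hint f ν x) ≤
        2 * (∑ x, ENNReal.ofReal (ν x) * Hint f μ x) +
          ENNReal.ofReal (fdiam X / Real.exp 1) := by
    intro μ hμ
    have hmc : ∀ x : X, Measurable (fun r : ℝ => corr f μ ν x r) :=
      fun x => measurable_corr f μ ν hμ.1 hν0 x
    have hmμ : ∀ x : X, Measurable (fun r : ℝ => chainFnE f (ballMass μ x r)) := by
      intro x
      have := measurable_hint_integrand f μ hμ.1 x 1 zero_le_one
      simpa using this
    have hx : ∀ x : X, ENNReal.ofReal (ν x) * Hint f ν x ≤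
        2 * (ENNReal.ofReal (ν x) * Hint f μ x) +
          2 * ∫⁻ r in Set.Ioi (0:ℝ), ENNReal.ofReal (ν x) * corr f μ ν x r := by
      intro x
      rcases eq_or_lt_of_le (hν0 x) with h0 | h0
      · rw [← h0]
        simp
      have hscale : Hint f ν x =
          2 * ∫⁻ r in Set.Ioi (0:ℝ), chainFnE f (ballMass ν x (2*r)) := by
        refine lintegral_Ioi_two_smul _ ?_
        have := measurable_hint_integrand f ν hν0 x 1 zero_le_one
        simpa using this
      have hpt : ∫⁻ r in Set.Ioi (0:ℝ), chainFnE f (ballMass ν x (2*r)) ≤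
          ∫⁻ r in Set.Ioi (0:ℝ), (chainFnE f (ballMass μ x r) + corr f μ ν x r) := by
        refine setLIntegral_mono ((hmμ x).add (hmc x)) (fun r hr => ?_)
        have hr0 : (0:ℝ) < r := hr
        refine corr_step f hf μ ν x ?_
        calc (0:ℝ) < ν x := h0
          _ ≤ ballMass ν x (2*r) := self_le_ballMass ν hν0 x (by linarith)
      have hadd : ∫⁻ r in Set.Ioi (0:ℝ), (chainFnE f (ballMass μ x r) + corr f μ ν x r) =
          Hint f μ x + ∫⁻ r in Set.Ioi (0:ℝ), corr f μ ν x r :=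
        lintegral_add_left (hmμ x) _
      have hHν : Hint f ν x ≤
          2 * Hint f μ x + 2 * ∫⁻ r in Set.Ioi (0:ℝ), corr f μ ν x r := by
        rw [hscale]
        calc 2 * ∫⁻ r in Set.Ioi (0:ℝ), chainFnE f (ballMass ν x (2*r))
            ≤ 2 * ∫⁻ r in Set.Ioi (0:ℝ), (chainFnE f (ballMass μ x r) + corr f μ ν x r) :=
              mul_le_mul_right hpt 2
          _ = 2 * Hint f μ x + 2 * ∫⁻ r in Set.Ioi (0:ℝ), corr f μ ν x r := by
              rw [hadd, mul_add]
      calc ENNReal.ofReal (ν x) * Hint f ν x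
          ≤ ENNReal.ofReal (ν x) *
            (2 * Hint f μ x + 2 * ∫⁻ r in Set.Ioi (0:ℝ), corr f μ ν x r) :=
            mul_le_mul_right hHν _
        _ = 2 * (ENNReal.ofReal (ν x) * Hint f μ x) +
            2 * ∫⁻ r in Set.Ioi (0:ℝ), ENNReal.ofReal (ν x) * corr f μ ν x r := by
            rw [lintegral_const_mul _ (hmc x)]
            ring
    have hsum : (∑ x, ENNReal.ofReal (ν x) * Hint f ν x) ≤
        2 * (∑ x, ENNReal.ofReal (ν x) * Hint f μ x) +
          2 * ∫⁻ r in Set.Ioi (0:ℝ), ∑ x, ENNReal.ofReal (ν x) * corr f μ ν x r := by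
      calc (∑ x, ENNReal.ofReal (ν x) * Hint f ν x)
          ≤ ∑ x, (2 * (ENNReal.ofReal (ν x) * Hint f μ x) +
            2 * ∫⁻ r in Set.Ioi (0:ℝ), ENNReal.ofReal (ν x) * corr f μ ν x r) :=
            Finset.sum_le_sum (fun x _ => hx x)
        _ = 2 * (∑ x, ENNReal.ofReal (ν x) * Hint f μ x) +
            2 * ∑ x, ∫⁻ r in Set.Ioi (0:ℝ), ENNReal.ofReal (ν x) * corr f μ ν x r := by
            rw [Finset.sum_add_distrib, ← Finset.mul_sum, ← Finset.mul_sum]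
        _ = 2 * (∑ x, ENNReal.ofReal (ν x) * Hint f μ x) +
            2 * ∫⁻ r in Set.Ioi (0:ℝ), ∑ x, ENNReal.ofReal (ν x) * corr f μ ν x r := by
            rw [← lintegral_finset_sum _ (fun x _ => (hmc x).const_mul _)]
    refine hsum.trans ?_
    have hbound : ∫⁻ r in Set.Ioi (0:ℝ), ∑ x, ENNReal.ofReal (ν x) * corr f μ ν x r ≤
        ENNReal.ofReal (Real.exp 1)⁻¹ * ENNReal.ofReal (fdiam X / 2) := by
      have hptw : ∀ r ∈ Set.Ioi (0:ℝ), (∑ x, ENNReal.ofReal (ν x) * corr f μ ν x r) ≤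
          (Set.Ioc (0:ℝ) (fdiam X / 2)).indicator
            (fun _ => ENNReal.ofReal (Real.exp 1)⁻¹) r := by
        intro r hr
        have hr0 : (0:ℝ) < r := hr
        rcases le_or_gt r (fdiam X / 2) with hle | hgt
        · rw [Set.indicator_of_mem (show r ∈ Set.Ioc (0:ℝ) (fdiam X / 2) from ⟨hr0, hle⟩)]
          exact vitali f μ ν hμ hν hr0.le
        · rw [Set.indicator_of_notMem (by simp [Set.mem_Ioc]; intro; linarith)]
          refine le_of_eq (Finset.sum_eq_zero (fun x _ => ?_))
          rw [corr_zero_far f μ ν hμ hν hgt.le x, mul_zero]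
      calc ∫⁻ r in Set.Ioi (0:ℝ), ∑ x, ENNReal.ofReal (ν x) * corr f μ ν x r
          ≤ ∫⁻ r in Set.Ioi (0:ℝ), (Set.Ioc (0:ℝ) (fdiam X / 2)).indicator
              (fun _ => ENNReal.ofReal (Real.exp 1)⁻¹) r :=
            setLIntegral_mono (measurable_const.indicator measurableSet_Ioc) hptw
        _ ≤ ∫⁻ r, (Set.Ioc (0:ℝ) (fdiam X / 2)).indicator
              (fun _ => ENNReal.ofReal (Real.exp 1)⁻¹) r :=
            setLIntegral_le_lintegral _ _
        _ = ENNReal.ofReal (Real.exp 1)⁻¹ * volume (Set.Ioc (0:ℝ) (fdiam X / 2)) := by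
            rw [lintegral_indicator measurableSet_Ioc, setLIntegral_const]
        _ = ENNReal.ofReal (Real.exp 1)⁻¹ * ENNReal.ofReal (fdiam X / 2) := by
            rw [Real.volume_Ioc, sub_zero]
      
    have hfinal : 2 * (ENNReal.ofReal (Real.exp 1)⁻¹ * ENNReal.ofReal (fdiam X / 2)) =
        ENNReal.ofReal (fdiam X / Real.exp 1) := by
      rw [← ENNReal.ofReal_mul (by positivity),
        show ((2:ℝ≥0∞)) = ENNReal.ofReal 2 by norm_num,
        ← ENNReal.ofReal_mul (by norm_num)]
      congr 1
      field_simp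
    refine add_le_add_right ?_ _
    calc 2 * ∫⁻ r in Set.Ioi (0:ℝ), ∑ x, ENNReal.ofReal (ν x) * corr f μ ν x r
        ≤ 2 * (ENNReal.ofReal (Real.exp 1)⁻¹ * ENNReal.ofReal (fdiam X / 2)) :=
          mul_le_mul_right hbound 2
      _ = ENNReal.ofReal (fdiam X / Real.exp 1) := hfinal
  -- conclude with the infimum
  set I := ⨅ μ : {m : X → ℝ // IsProbOn m}, ∑ x, ENNReal.ofReal (ν x) * Hint f μ.1 x with hI
  rcases eq_or_ne I ⊤ with hItop | hItop
  · rw [hItop]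
    rw [ENNReal.mul_top (by norm_num)]
    exact le_top.trans_eq (by rw [top_add])
  refine ENNReal.le_of_forall_pos_le_add (fun ε hε _ => ?_)
  set δ : ℝ≥0∞ := (ε : ℝ≥0∞) / 2 with hδ
  have hδ0 : δ ≠ 0 := by
    simp [hδ, ENNReal.div_eq_zero_iff]
    exact_mod_cast hε.ne'
  have hlt : I < I + δ := ENNReal.lt_add_right hItop hδ0
  obtain ⟨m0, hm0⟩ := iInf_lt_iff.1 (hI ▸ hlt)
  have h1 := key m0.1 m0.2
  have h2 : 2 * (∑ x, ENNReal.ofReal (ν x) * Hint f m0.1 x) ≤ 2 * (I + δ) :=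
    mul_le_mul_right hm0.le 2
  have h3 : 2 * (I + δ) = 2 * I + (ε : ℝ≥0∞) := by
    rw [mul_add, hδ, ENNReal.mul_div_cancel' (by norm_num) (by norm_num)]
  calc (∑ x, ENNReal.ofReal (ν x) * Hint f ν x)
      ≤ 2 * (∑ x, ENNReal.ofReal (ν x) * Hint f m0.1 x) +
        ENNReal.ofReal (fdiam X / Real.exp 1) := h1
    _ ≤ 2 * (I + δ) + ENNReal.ofReal (fdiam X / Real.exp 1) := add_le_add_left h2 _
    _ = (2 * I + ENNReal.ofReal (fdiam X / Real.exp 1)) + (ε : ℝ≥0∞) := by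
        rw [h3]; ring
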